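/- Let $(\lambda_n)_{n\ge2}$ be positive reals with $\sum_{n\ge2}\lambda_n^{-1}<\infty$, let $X_i$ be independent Exp($\lambda_i$) random variables, $T_n=\sum_{i=n+1}^\infty X_i$, and $A_n=\sum_{i=n+1}^\infty \lambda_i^{-1}$. If $\sum_{i=1}^\infty (\lambda_{i+1}A_i)^{-2} < \infty$, then $T_n/A_n \to 1$ almost surely as $n\to\infty$. -/

import Mathlib

open MeasureTheory ProbabilityTheory Filter Topology Real Set
open scoped ENNReal NNReal

namespace HittingSLLNAux

lemma integrableOn_pow_mul_exp (r : ℝ) (hr : 0 < r) (n : ℕ) :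
    IntegrableOn (fun x : ℝ => x ^ n * Real.exp (-(r * x))) (Set.Ioi 0) := by
  have h := integrableOn_rpow_mul_exp_neg_mul_rpow (p := 1) (s := (n : ℝ))
    (by exact_mod_cast neg_one_lt_zero.trans_le (Nat.cast_nonneg n)) zero_lt_one hr
  have he : (fun x : ℝ => x ^ (n : ℝ) * Real.exp (-r * x ^ (1:ℝ)))
      = fun x : ℝ => x ^ n * Real.exp (-(r * x)) := by
    funext x; rw [Real.rpow_natCast, Real.rpow_one, neg_mul]
  rwa [he] at h

lemma exp_pow_integral (r : ℝ) (hr : 0 < r) (n : ℕ) :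
    Integrable (fun x : ℝ => x ^ n) (expMeasure r) ∧
      ∫ x, x ^ n ∂(expMeasure r) = (Nat.factorial n : ℝ) / r ^ n := by
  have hd : Measurable fun x : ℝ => Real.toNNReal (gammaPDFReal 1 r x) :=
    (measurable_gammaPDFReal 1 r).real_toNNReal
  have hmeq : expMeasure r
      = volume.withDensity fun x => ((Real.toNNReal (gammaPDFReal 1 r x) : ℝ≥0) : ℝ≥0∞) := rfl
  have hpdf : ∀ x : ℝ, 0 ≤ x → gammaPDFReal 1 r x = r * Real.exp (-(r * x)) := by
    intro x hx
    simp [gammaPDFReal, hx, Real.Gamma_one, Real.rpow_one]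
  have hae : (fun x : ℝ => Real.toNNReal (gammaPDFReal 1 r x) • (x ^ n))
      =ᵐ[(volume : Measure ℝ)]
        (Set.Ioi (0:ℝ)).indicator (fun x => (r * Real.exp (-(r * x))) * x ^ n) := by
    have h0 : ({(0:ℝ)} : Set ℝ)ᶜ ∈ ae (volume : Measure ℝ) :=
      compl_mem_ae_iff.mpr (volume_singleton)
    filter_upwards [h0] with x hx
    simp only [Set.mem_compl_iff, Set.mem_singleton_iff] at hx
    rcases lt_or_gt_of_ne hx with h | h
    · rw [Set.indicator_of_notMem (by simp [not_lt, h.le])]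
      simp [gammaPDFReal, not_le.mpr h]
    · rw [Set.indicator_of_mem (Set.mem_Ioi.mpr h)]
      rw [NNReal.smul_def, smul_eq_mul, Real.coe_toNNReal _ (gammaPDFReal_nonneg zero_lt_one hr x),
        hpdf x h.le]
  have hIoi : IntegrableOn (fun x : ℝ => (r * Real.exp (-(r * x))) * x ^ n) (Set.Ioi 0) := by
    have he : (fun x : ℝ => (r * Real.exp (-(r * x))) * x ^ n)
        = fun x : ℝ => r * (x ^ n * Real.exp (-(r * x))) := by funext x; ring
    rw [he]
    exact (integrableOn_pow_mul_exp r hr n).const_mul r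
  have hint_vol : Integrable (fun x : ℝ => Real.toNNReal (gammaPDFReal 1 r x) • (x ^ n))
      (volume : Measure ℝ) :=
    (hIoi.integrable_indicator measurableSet_Ioi).congr hae.symm
  constructor
  · rw [hmeq]
    exact (integrable_withDensity_iff_integrable_smul hd).mpr hint_vol
  · have h1 : ∫ x, x ^ n ∂(expMeasure r)
        = ∫ x, Real.toNNReal (gammaPDFReal 1 r x) • (x ^ n) ∂(volume : Measure ℝ) := by
      rw [hmeq, integral_withDensity_eq_integral_smul hd]
    rw [h1, integral_congr_ae hae, integral_indicator measurableSet_Ioi]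
    have h2 : (fun x : ℝ => (r * Real.exp (-(r * x))) * x ^ n)
        = fun x : ℝ => r * (x ^ (((n : ℝ) + 1) - 1) * Real.exp (-(r * x))) := by
      funext x
      rw [add_sub_cancel_right, Real.rpow_natCast]; ring
    rw [h2, integral_const_mul,
      integral_rpow_mul_exp_neg_mul_Ioi (by positivity) hr, Real.Gamma_nat_eq_factorial]
    have h3 : ((1:ℝ)/r) ^ ((n:ℝ)+1) = (1/r) ^ (n+1 : ℕ) := by
      rw [← Real.rpow_natCast (1/r) (n+1)]; push_cast; ring_nf
    rw [h3]
    field_simp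
    ring_nf
    rw [inv_pow]
    field_simp


lemma variance_sub_const {Ω : Type*} [MeasurableSpace Ω] (μ : Measure Ω) [IsProbabilityMeasure μ]
    (X : Ω → ℝ) (hX : Integrable X μ) (a : ℝ) :
    variance (X - fun _ : Ω => a) μ = variance X μ := by
  have hm : μ[X - fun _ : Ω => a] = μ[X] - a := by
    simp only [Pi.sub_apply]
    rw [integral_sub hX (integrable_const a), integral_const]; simp
  unfold ProbabilityTheory.variance ProbabilityTheory.evariance
  rw [hm]
  congr 1
  refine lintegral_congr fun ω => ?_
  have : (X - fun _ : Ω => a) ω - (μ[X] - a) = X ω - μ[X] := by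
    simp only [Pi.sub_apply]; ring
  rw [this]

lemma abel_id (b r : ℕ → ℝ) (k : ℕ) : ∀ j : ℕ,
    ∑ i ∈ Finset.range (j + 1), b (k + i) * (r (k + i) - r (k + i + 1))
      = b k * r k - b (k + j) * r (k + j + 1)
        + ∑ m ∈ Finset.range j, (b (k + m + 1) - b (k + m)) * r (k + m + 1) := by
  intro j
  induction j with
  | zero =>
    simp
    ring
  | succ j ih =>
    rw [Finset.sum_range_succ, ih, Finset.sum_range_succ]
    generalize ∑ m ∈ Finset.range j, (b (k + m + 1) - b (k + m)) * r (k + m + 1) = S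
    ring

lemma kron (b : ℕ → ℝ) (hbpos : ∀ m, 0 < b m) (hbanti : ∀ m, b (m + 1) ≤ b m)
    (Y : ℕ → ℝ) (c : ℝ) (hc : Tendsto (fun n => ∑ m ∈ Finset.range n, Y m) atTop (𝓝 c))
    (s : ℕ → ℝ) (hs : ∀ k, HasSum (fun i => b (k + i) * Y (k + i)) (s k)) :
    Tendsto (fun k => s k / b k) atTop (𝓝 0) := by
  set r : ℕ → ℝ := fun k => c - ∑ m ∈ Finset.range k, Y m with hr
  have hr0 : Tendsto r atTop (𝓝 0) := by
    have := tendsto_const_nhds (x := c) (f := atTop (α := ℕ)) |>.sub hc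
    simpa using this
  have hYr : ∀ m, Y m = r m - r (m + 1) := by
    intro m
    simp only [hr, Finset.sum_range_succ]
    ring
  have key : ∀ k (ε : ℝ), 0 ≤ ε → (∀ m, k ≤ m → |r m| ≤ ε) → |s k| ≤ 2 * b k * ε := by
    intro k ε hε hrm
    have hid : ∀ j : ℕ, ∑ i ∈ Finset.range (j + 1), b (k + i) * Y (k + i)
        = b k * r k - b (k + j) * r (k + j + 1)
          + ∑ m ∈ Finset.range j, (b (k + m + 1) - b (k + m)) * r (k + m + 1) := by
      intro j
      rw [← abel_id b r k j]
      exact Finset.sum_congr rfl fun i _ => by rw [hYr (k + i)]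
    have hbound : ∀ j : ℕ, |∑ i ∈ Finset.range (j + 1), b (k + i) * Y (k + i)| ≤ 2 * b k * ε := by
      intro j
      rw [hid j]
      have h1 : |b k * r k| ≤ b k * ε := by
        rw [abs_mul, abs_of_pos (hbpos k)]
        exact mul_le_mul_of_nonneg_left (hrm k le_rfl) (hbpos k).le
      have h2 : |b (k + j) * r (k + j + 1)| ≤ b (k + j) * ε := by
        rw [abs_mul, abs_of_pos (hbpos _)]
        exact mul_le_mul_of_nonneg_left (hrm _ (by omega)) (hbpos _).le
      have h3 : |∑ m ∈ Finset.range j, (b (k + m + 1) - b (k + m)) * r (k + m + 1)|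
          ≤ (b k - b (k + j)) * ε := by
        calc |∑ m ∈ Finset.range j, (b (k + m + 1) - b (k + m)) * r (k + m + 1)|
            ≤ ∑ m ∈ Finset.range j, |(b (k + m + 1) - b (k + m)) * r (k + m + 1)| :=
              Finset.abs_sum_le_sum_abs _ _
          _ ≤ ∑ m ∈ Finset.range j, (b (k + m) - b (k + m + 1)) * ε := by
              refine Finset.sum_le_sum fun m _ => ?_
              rw [abs_mul, abs_sub_comm,
                abs_of_nonneg (by linarith [hbanti (k + m)] : (0:ℝ) ≤ b (k+m) - b (k+m+1))]
              exact mul_le_mul_of_nonneg_left (hrm _ (by omega)) (by linarith [hbanti (k + m)])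
          _ = (b k - b (k + j)) * ε := by
              rw [← Finset.sum_mul]
              congr 1
              have := Finset.sum_range_sub' (fun m => b (k + m)) j
              simpa [add_assoc] using this
      have hbk : b (k + j) ≤ b k := antitone_nat_of_succ_le hbanti (by omega)
      calc |b k * r k - b (k + j) * r (k + j + 1)
            + ∑ m ∈ Finset.range j, (b (k + m + 1) - b (k + m)) * r (k + m + 1)|
          ≤ |b k * r k - b (k + j) * r (k + j + 1)|
            + |∑ m ∈ Finset.range j, (b (k + m + 1) - b (k + m)) * r (k + m + 1)| := abs_add_le _ _
        _ ≤ (|b k * r k| + |b (k + j) * r (k + j + 1)|)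
            + |∑ m ∈ Finset.range j, (b (k + m + 1) - b (k + m)) * r (k + m + 1)| := by
            have := abs_sub (b k * r k) (b (k + j) * r (k + j + 1))
            linarith
        _ ≤ 2 * b k * ε := by linarith
    have htend : Tendsto (fun j => ∑ i ∈ Finset.range (j + 1), b (k + i) * Y (k + i)) atTop
        (𝓝 (s k)) :=
      (tendsto_add_atTop_iff_nat 1).mpr ((hs k).tendsto_sum_nat)
    exact le_of_tendsto htend.abs (Filter.Eventually.of_forall hbound)
  rw [Metric.tendsto_atTop]
  intro ε hε
  obtain ⟨N, hN⟩ := (Metric.tendsto_atTop.mp hr0) (ε / 3) (by linarith)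
  refine ⟨N, fun k hk => ?_⟩
  have hb : |s k| ≤ 2 * b k * (ε / 3) := by
    refine key k (ε / 3) (by linarith) fun m hm => ?_
    have := hN m (le_trans hk hm)
    rw [Real.dist_eq, sub_zero] at this
    exact this.le
  rw [Real.dist_eq, sub_zero, abs_div, abs_of_pos (hbpos k)]
  rw [div_lt_iff₀ (hbpos k)]
  calc |s k| ≤ 2 * b k * (ε / 3) := hb
    _ < ε * b k := by nlinarith [hbpos k]

end HittingSLLNAux

theorem hitting_time_slln {Ω : Type*} [MeasurableSpace Ω]
    (P : Measure Ω) [IsProbabilityMeasure P]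
    (lam : ℕ → ℝ) (hpos : ∀ n, 0 < lam n)
    (hsum : Summable fun n => (lam n)⁻¹)
    (X : ℕ → Ω → ℝ) (hmeas : ∀ i, Measurable (X i))
    (hindep : iIndepFun X P)
    (hexp : ∀ i, Measure.map (X i) P = expMeasure (lam i))
    (T : ℕ → Ω → ℝ) (hTmeas : ∀ n, Measurable (T n))
    (hT : ∀ᵐ ω ∂P, ∀ n, HasSum (fun i => X (n + 1 + i) ω) (T n ω))
    (A : ℕ → ℝ) (hA : ∀ n, A n = ∑' i : ℕ, (lam (n + 1 + i))⁻¹)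
    (hcond : Summable fun i : ℕ => ((lam (i + 2) * A (i + 1))⁻¹) ^ 2) :
    ∀ᵐ ω ∂P, Tendsto (fun n => T n ω / A n) atTop (𝓝 1) := by
  classical
  -- basic facts about A
  have hAtail : ∀ n, Summable fun i => (lam (n + 1 + i))⁻¹ := by
    intro n
    have h := (summable_nat_add_iff (n + 1)).mpr hsum
    exact h.congr fun i => by rw [add_comm]
  have hApos : ∀ n, 0 < A n := by
    intro n
    rw [hA n]
    exact Summable.tsum_pos (hAtail n) (fun i => (inv_nonneg).mpr (hpos _).le) 0
      (inv_pos.mpr (hpos _))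
  have hAne : ∀ n, A n ≠ 0 := fun n => (hApos n).ne'
  have hAsucc : ∀ n, A n = (lam (n + 1))⁻¹ + A (n + 1) := by
    intro n
    rw [hA n, hA (n + 1), Summable.tsum_eq_zero_add (hAtail n)]
    congr 1
    exact tsum_congr fun i => by congr 2; omega
  have hAanti : ∀ n, A (n + 1) ≤ A n := by
    intro n
    rw [hAsucc n]
    have : 0 ≤ (lam (n + 1))⁻¹ := (inv_nonneg).mpr (hpos _).le
    linarith
  -- moments of X i
  have hX2 : ∀ i, MemLp (X i) 2 P := by
    intro i
    haveI := isProbabilityMeasure_expMeasure (hpos i)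
    have h1 : MemLp (id : ℝ → ℝ) 2 (expMeasure (lam i)) := by
      refine (memLp_two_iff_integrable_sq aestronglyMeasurable_id).mpr ?_
      simpa using (HittingSLLNAux.exp_pow_integral (lam i) (hpos i) 2).1
    have h2 : MemLp (id : ℝ → ℝ) 2 (Measure.map (X i) P) := by rw [hexp i]; exact h1
    have h3 := (memLp_map_measure_iff (aestronglyMeasurable_id) (hmeas i).aemeasurable).mp h2
    simpa using h3
  have hXint : ∀ i, Integrable (X i) P := fun i => (hX2 i).integrable one_le_two
  have hmean : ∀ i, ∫ ω, X i ω ∂P = (lam i)⁻¹ := by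
    intro i
    have h := integral_map (hmeas i).aemeasurable
      (f := (id : ℝ → ℝ)) (aestronglyMeasurable_id (μ := Measure.map (X i) P))
    rw [hexp i] at h
    have h1 := (HittingSLLNAux.exp_pow_integral (lam i) (hpos i) 1).2
    have h2 : ∫ x, (x : ℝ) ∂(expMeasure (lam i)) = (lam i)⁻¹ := by
      have he : (fun x : ℝ => x ^ 1) = fun x : ℝ => x := by funext x; rw [pow_one]
      rw [he] at h1
      rw [h1]
      simp [Nat.factorial]
    rw [← h2]
    simpa using h.symm
  have hsq : ∀ i, ∫ ω, X i ω ^ 2 ∂P = 2 / (lam i) ^ 2 := by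
    intro i
    have h := integral_map (μ := P) (φ := X i) (hmeas i).aemeasurable
      (f := fun x : ℝ => x ^ 2) ((measurable_id.pow_const 2).aestronglyMeasurable)
    rw [hexp i] at h
    have h1 := (HittingSLLNAux.exp_pow_integral (lam i) (hpos i) 2).2
    rw [← h, h1]
    norm_num [Nat.factorial]
  have hvarX : ∀ i, variance (X i) P = ((lam i) ^ 2)⁻¹ := by
    intro i
    rw [variance_eq_sub (hX2 i)]
    have h1 : P[(X i) ^ 2] = 2 / (lam i) ^ 2 := by
      rw [← hsq i]; rfl
    have h2 : P[X i] = (lam i)⁻¹ := hmean i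
    rw [h1, h2]
    have hl := (hpos i).ne'
    field_simp
    ring
  -- the martingale
  have hsm : ∀ i, StronglyMeasurable (X i) := fun i => (hmeas i).stronglyMeasurable
  set ℱ := MeasureTheory.Filtration.natural X hsm with hℱdef
  set 𝒢 : MeasureTheory.Filtration ℕ (by infer_instance : MeasurableSpace Ω) :=
    ⟨fun n => ℱ (n + 2), fun i j hij => ℱ.mono (by omega), fun n => ℱ.le (n + 2)⟩ with h𝒢def
  set Y : ℕ → Ω → ℝ :=
    fun m => (A (m + 1))⁻¹ • (X (m + 2) - fun _ => (lam (m + 2))⁻¹) with hYdef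
  set f : ℕ → Ω → ℝ := fun n => ∑ m ∈ Finset.range (n + 1), Y m with hfdef
  have hY2 : ∀ m, MemLp (Y m) 2 P :=
    fun m => ((hX2 (m + 2)).sub (memLp_const _)).const_smul _
  have hYint : ∀ m, Integrable (Y m) P := fun m => (hY2 m).integrable one_le_two
  have hf2 : ∀ n, MemLp (f n) 2 P := fun n => memLp_finset_sum' _ fun m _ => hY2 m
  have hfint : ∀ n, Integrable (f n) P := fun n => (hf2 n).integrable one_le_two
  have hEY : ∀ m, ∫ ω, Y m ω ∂P = 0 := by
    intro m
    have h1 : ∫ ω, Y m ω ∂P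
        = (A (m + 1))⁻¹ • ∫ ω, (X (m + 2) ω - (lam (m + 2))⁻¹) ∂P := by
      simp only [hYdef, Pi.smul_apply, Pi.sub_apply]
      exact integral_smul _ _
    rw [h1, integral_sub (hXint _) (integrable_const _), hmean, integral_const]
    simp
  have hEf : ∀ n, ∫ ω, f n ω ∂P = 0 := by
    intro n
    simp only [hfdef, Finset.sum_apply]
    rw [integral_finset_sum _ fun m _ => hYint m]
    exact Finset.sum_eq_zero fun m _ => hEY m
  have hadp : StronglyAdapted 𝒢 f := by
    intro n
    refine Finset.stronglyMeasurable_sum _ fun m hm => ?_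
    have h1 : StronglyMeasurable[MeasureTheory.Filtration.natural X hsm (m + 2)] (X (m + 2)) :=
      MeasureTheory.Filtration.stronglyAdapted_natural hsm (m + 2)
    have h2 : StronglyMeasurable[MeasureTheory.Filtration.natural X hsm (m + 2)] (Y m) := by
      simp only [hYdef]
      exact (h1.sub stronglyMeasurable_const).const_smul ((A (m + 1))⁻¹)
    have hle : (MeasureTheory.Filtration.natural X hsm (m + 2) : MeasurableSpace Ω)
        ≤ 𝒢 n := by
      show (ℱ (m + 2) : MeasurableSpace Ω) ≤ ℱ (n + 2)
      exact ℱ.mono (by simp at hm; omega)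
    exact h2.mono hle
  have hmart : Martingale f 𝒢 P := by
    refine martingale_nat hadp hfint fun n => ?_
    have hsplit : f (n + 1) = f n + Y (n + 1) := by
      simp only [hfdef]
      exact Finset.sum_range_succ _ _
    have hcX : P[X (n + 3)|𝒢 n] =ᵐ[P] fun _ => (lam (n + 3))⁻¹ := by
      have h := hindep.condExp_natural_ae_eq_of_lt hsm (show n + 2 < n + 3 by omega)
      rw [hmean (n + 3)] at h
      exact h
    have hY0 : P[Y (n + 1)|𝒢 n] =ᵐ[P] 0 := by
      have h1 : P[Y (n + 1)|𝒢 n]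
          =ᵐ[P] (A (n + 2))⁻¹ • P[(X (n + 3) - fun _ => (lam (n + 3))⁻¹ : Ω → ℝ)|𝒢 n] :=
        condExp_smul _ _ _
      have h2 : P[(X (n + 3) - fun _ => (lam (n + 3))⁻¹ : Ω → ℝ)|𝒢 n]
          =ᵐ[P] P[X (n + 3)|𝒢 n] - P[(fun _ => (lam (n + 3))⁻¹ : Ω → ℝ)|𝒢 n] :=
        condExp_sub (hXint (n + 3)) (integrable_const _) _
      have h3 : P[(fun _ => (lam (n + 3))⁻¹ : Ω → ℝ)|𝒢 n] = fun _ => (lam (n + 3))⁻¹ :=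
        condExp_const (𝒢.le n) _
      refine h1.trans ?_
      refine (h2.const_smul ((A (n + 2))⁻¹)).trans ?_
      rw [h3]
      filter_upwards [hcX] with ω hω
      simp [hω]
    have h4 : P[f (n + 1)|𝒢 n] =ᵐ[P] P[f n|𝒢 n] + P[Y (n + 1)|𝒢 n] := by
      rw [hsplit]
      exact condExp_add (hfint n) (hYint (n + 1)) _
    have h5 : P[f n|𝒢 n] = f n :=
      condExp_of_stronglyMeasurable (𝒢.le n) (hadp n) (hfint n)
    refine EventuallyEq.symm (h4.trans ?_)
    rw [h5]
    filter_upwards [hY0] with ω hω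
    simp only [Pi.add_apply, hω, Pi.zero_apply, add_zero]
  -- variance bound
  have hYindep : ∀ i j, i ≠ j → IndepFun (Y i) (Y j) P := by
    intro i j hij
    have h := hindep.indepFun (show i + 2 ≠ j + 2 by omega)
    have hφ : ∀ m : ℕ, Measurable fun x : ℝ => (A (m + 1))⁻¹ • (x - (lam (m + 2))⁻¹) :=
      fun m => by fun_prop
    exact h.comp (hφ i) (hφ j)
  have hvarY : ∀ m, variance (Y m) P = ((lam (m + 2) * A (m + 1))⁻¹) ^ 2 := by
    intro m
    simp only [hYdef]
    rw [variance_smul, HittingSLLNAux.variance_sub_const P (X (m + 2)) (hXint (m + 2)) _,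
      hvarX (m + 2), mul_inv, mul_pow, ← inv_pow]
    ring
  set V : ℝ := ∑' i, ((lam (i + 2) * A (i + 1))⁻¹) ^ 2 with hVdef
  have hvarf : ∀ n, variance (f n) P ≤ V := by
    intro n
    simp only [hfdef]
    rw [IndepFun.variance_sum (fun m _ => hY2 m)
      (fun i _ j _ hij => hYindep i j hij)]
    calc ∑ m ∈ Finset.range (n + 1), variance (Y m) P
        = ∑ m ∈ Finset.range (n + 1), ((lam (m + 2) * A (m + 1))⁻¹) ^ 2 :=
          Finset.sum_congr rfl fun m _ => hvarY m
      _ ≤ V := Summable.sum_le_tsum _ (fun i _ => sq_nonneg _) hcond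
  -- L¹ boundedness
  have hVfin : (ENNReal.ofReal V) ^ (2⁻¹ : ℝ) ≠ ∞ :=
    ENNReal.rpow_ne_top_of_nonneg (by norm_num) ENNReal.ofReal_ne_top
  have hbdd : ∀ n, eLpNorm (f n) 1 P ≤ (((ENNReal.ofReal V) ^ (2⁻¹ : ℝ)).toNNReal : ℝ≥0∞) := by
    intro n
    have hkey : eLpNorm (f n) 2 P ≤ (ENNReal.ofReal V) ^ (2⁻¹ : ℝ) := by
      rw [eLpNorm_eq_lintegral_rpow_enorm_toReal two_ne_zero ENNReal.ofNat_ne_top]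
      simp only [ENNReal.toReal_ofNat, one_div]
      refine ENNReal.rpow_le_rpow ?_ (by norm_num)
      have hev : ∫⁻ ω, ‖f n ω‖ₑ ^ (2 : ℝ) ∂P = evariance (f n) P := by
        unfold ProbabilityTheory.evariance
        rw [hEf n]
        simp [sub_zero, ENNReal.rpow_two]
      rw [hev, ← (hf2 n).ofReal_variance_eq]
      exact ENNReal.ofReal_le_ofReal (hvarf n)
    calc eLpNorm (f n) 1 P ≤ eLpNorm (f n) 2 P :=
        eLpNorm_le_eLpNorm_of_exponent_le (by norm_num) (hf2 n).aestronglyMeasurable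
      _ ≤ (ENNReal.ofReal V) ^ (2⁻¹ : ℝ) := hkey
      _ = _ := (ENNReal.coe_toNNReal hVfin).symm
  have hconv := hmart.submartingale.exists_ae_tendsto_of_bdd hbdd
  -- conclusion
  filter_upwards [hT, hconv] with ω hTω hcω
  obtain ⟨c, hc⟩ := hcω
  have hcS : Tendsto (fun n => ∑ m ∈ Finset.range n,
      (A (m + 1))⁻¹ * (X (m + 2) ω - (lam (m + 2))⁻¹)) atTop (𝓝 c) := by
    apply (tendsto_add_atTop_iff_nat 1).mp
    have he : ∀ n, ∑ m ∈ Finset.range (n + 1),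
        (A (m + 1))⁻¹ * (X (m + 2) ω - (lam (m + 2))⁻¹) = f n ω := by
      intro n
      simp [hfdef, hYdef, Finset.sum_apply]
    simp only [he]
    exact hc
  have hhs : ∀ k, HasSum (fun i => A (k + i + 1) *
      ((A (k + i + 1))⁻¹ * (X (k + i + 2) ω - (lam (k + i + 2))⁻¹)))
      (T (k + 1) ω - A (k + 1)) := by
    intro k
    have hXs : HasSum (fun i => X (k + 1 + 1 + i) ω) (T (k + 1) ω) := hTω (k + 1)
    have hL : HasSum (fun i => (lam (k + 1 + 1 + i))⁻¹) (A (k + 1)) := by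
      have h1 := (hAtail (k + 1)).hasSum
      rwa [← hA (k + 1)] at h1
    have hsub := hXs.sub hL
    have hfe : (fun i => X (k + 1 + 1 + i) ω - (lam (k + 1 + 1 + i))⁻¹)
        = fun i => A (k + i + 1) *
          ((A (k + i + 1))⁻¹ * (X (k + i + 2) ω - (lam (k + i + 2))⁻¹)) := by
      funext i
      rw [mul_inv_cancel_left₀ (hAne (k + i + 1))]
      rw [show k + 1 + 1 + i = k + i + 2 from by omega]
    rwa [hfe] at hsub
  have hkron := HittingSLLNAux.kron (fun m => A (m + 1)) (fun m => hApos (m + 1))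
    (fun m => hAanti (m + 1)) _ c hcS (fun k => T (k + 1) ω - A (k + 1)) hhs
  have h0 : Tendsto (fun n => (T n ω - A n) / A n) atTop (𝓝 0) :=
    (tendsto_add_atTop_iff_nat 1).mp hkron
  have h1 : Tendsto (fun n => 1 + (T n ω - A n) / A n) atTop (𝓝 (1 + 0)) :=
    tendsto_const_nhds.add h0
  rw [add_zero] at h1
  have hfun : (fun n => 1 + (T n ω - A n) / A n) = fun n => T n ω / A n := by
    funext n
    rw [← div_self (hAne n), ← add_div]
    congr 1
    ring
  rwa [hfun] at h1
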